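/- arXiv:2108.12341 — 2 statements merged into one kernel-verified Lean document; each statement's English description precedes it below -/
import Mathlib

section
/- Consider the closed-loop system: x̃ : ℝ → ℝⁿ and x̃_c : ℝ → ℝ^{nG} are differentiable and satisfy x̃'(t) = (J − R̃(x̃(t)))·Q·x̃(t) + g·ũ(t) and x̃_c'(t) = −k_I·𝓛·ũ_c(t), where ỹ(t) = gᵀQx̃(t), ỹ_c(t) = −𝓛·x̃_c(t), ũ(t) = −r·ỹ(t) − w⁻¹·ỹ_c(t), and ũ_c(t) = (w⁻¹)ᵀ·ỹ(t), with r, w ∈ ℝ^{nG×nG}, w invertible, k_I diagonal with positive entries, and 𝓛 symmetric. Assume the last nN-block q̃(t) of x̃(t) satisfies q̃_k(t) + q̄_k ≠ 0 for all k and t. Then the total storage H_t(t) = ½x̃(t)ᵀQx̃(t) + ½x̃_c(t)ᵀk_I⁻¹x̃_c(t) is differentiable with H_t'(t) = −(Qx̃(t))ᵀ·(R̃(x̃(t)) + g·r·gᵀ)·(Qx̃(t)) for all t. -/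
open Matrix

/-- Index type of the microgrid state: generator currents, line currents, bus charges. -/
abbrev BIdx (nG nE nN : ℕ) := Fin nG ⊕ (Fin nE ⊕ Fin nN)

/-- The input matrix `g = [I; 0; 0]`. -/
noncomputable def gMat (nG nE nN : ℕ) : Matrix (BIdx nG nE nN) (Fin nG) ℝ :=
  Matrix.of fun i j =>
    match i with
    | Sum.inl i' => if i' = j then (1 : ℝ) else 0
    | Sum.inr _ => 0

/-- Block-diagonal matrix with three diagonal blocks. -/
noncomputable def bd3 {nG nE nN : ℕ} (A : Matrix (Fin nG) (Fin nG) ℝ)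
    (B : Matrix (Fin nE) (Fin nE) ℝ) (D : Matrix (Fin nN) (Fin nN) ℝ) :
    Matrix (BIdx nG nE nN) (BIdx nG nE nN) ℝ :=
  Matrix.fromBlocks A 0 0 (Matrix.fromBlocks B 0 0 D)

/-- `G_P(q̃) = diag (P_k C_k² / (q̄_k (q̃_k + q̄_k)))`. -/
noncomputable def GPm {nN : ℕ} (P cD qbar : Fin nN → ℝ) (qt : Fin nN → ℝ) :
    Matrix (Fin nN) (Fin nN) ℝ :=
  Matrix.diagonal fun k => P k * (cD k) ^ 2 / (qbar k * (qt k + qbar k))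

/-- The state-dependent dissipation matrix
`R̃(z̃) = blockdiag(R_G + R_D, R_E, G − G_P(q̃))` of the incremental microgrid model. -/
noncomputable def Rtil {nG nE nN : ℕ} (rG rD : Fin nG → ℝ) (rE : Fin nE → ℝ)
    (gD cD P qbar : Fin nN → ℝ) (z : BIdx nG nE nN → ℝ) :
    Matrix (BIdx nG nE nN) (BIdx nG nE nN) ℝ :=
  bd3 (Matrix.diagonal fun i => rG i + rD i) (Matrix.diagonal rE)
    (Matrix.diagonal gD - GPm P cD qbar fun k => z (Sum.inr (Sum.inr k)))


lemma hasDerivAt_quadForm {n : Type*} [Fintype n]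
    (A : Matrix n n ℝ) (x : ℝ → n → ℝ) (v : n → ℝ) (t : ℝ)
    (hx : HasDerivAt x v t) :
    HasDerivAt (fun s => x s ⬝ᵥ (A *ᵥ x s))
      (v ⬝ᵥ (A *ᵥ x t) + x t ⬝ᵥ (A *ᵥ v)) t := by
  have hxi : ∀ i, HasDerivAt (fun s => x s i) (v i) t := fun i => hasDerivAt_pi.1 hx i
  have key : HasDerivAt (fun s => ∑ i, x s i * ∑ j, A i j * x s j)
      (∑ i, (v i * ∑ j, A i j * x t j + x t i * ∑ j, A i j * v j)) t := by
    apply HasDerivAt.fun_sum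
    intro i _
    exact (hxi i).mul (HasDerivAt.fun_sum fun j _ => (hxi j).const_mul (A i j))
  convert key using 1
  all_goals simp [dotProduct, mulVec, Finset.sum_add_distrib]

lemma hasDerivAt_halfQuad {n : Type*} [Fintype n]
    (A : Matrix n n ℝ) (hA : Aᵀ = A) (x : ℝ → n → ℝ) (v : n → ℝ) (t : ℝ)
    (hx : HasDerivAt x v t) :
    HasDerivAt (fun s => (1/2 : ℝ) * (x s ⬝ᵥ (A *ᵥ x s))) (v ⬝ᵥ (A *ᵥ x t)) t := by
  have h := (hasDerivAt_quadForm A x v t hx).const_mul (1/2 : ℝ)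
  convert h using 1
  case e'_4 => rfl
  case e'_5 => rfl
  have h2 : x t ⬝ᵥ (A *ᵥ v) = v ⬝ᵥ (A *ᵥ x t) := by
    rw [Matrix.dotProduct_mulVec, ← Matrix.mulVec_transpose, hA, dotProduct_comm]
  rw [h2]; ring

lemma mulVec_dot {m n : Type*} [Fintype m] [Fintype n]
    (A : Matrix m n ℝ) (u : n → ℝ) (yy : m → ℝ) :
    (A *ᵥ u) ⬝ᵥ yy = u ⬝ᵥ (Aᵀ *ᵥ yy) := by
  rw [dotProduct_comm, Matrix.dotProduct_mulVec, ← Matrix.mulVec_transpose, dotProduct_comm]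


/-- **energy balance, eq. (10).** Along the closed loop obtained by
interconnecting the incremental microgrid pH model with the consensus controller via
`ũ = −rỹ − w⁻¹ỹ_c`, `ũ_c = (w⁻¹)ᵀỹ`, the total storage
`H_t = ½x̃ᵀQx̃ + ½x̃_cᵀk_I⁻¹x̃_c` satisfies
`H_t' = −(Qx̃)ᵀ(R̃(x̃) + g r gᵀ)(Qx̃)`. -/
theorem closed_loop_energy_balance
    (nG nE nN : ℕ) (hnG : 0 < nG) (hnE : 0 < nE) (hnN : 0 < nN)
    (rG rD : Fin nG → ℝ) (rE : Fin nE → ℝ) (gD cD : Fin nN → ℝ)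
    (hrG : ∀ i, 0 < rG i) (hrD : ∀ i, 0 < rD i) (hrE : ∀ j, 0 < rE j)
    (hcD : ∀ k, 0 < cD k) (hgD : ∀ k, 0 ≤ gD k)
    (Q : Matrix (BIdx nG nE nN) (BIdx nG nE nN) ℝ) (hQsymm : Q.IsSymm) (hQpd : Q.PosDef)
    (J : Matrix (BIdx nG nE nN) (BIdx nG nE nN) ℝ) (hJ : Jᵀ = -J)
    (P qbar : Fin nN → ℝ) (hqbar : ∀ k, qbar k ≠ 0)
    (kd : Fin nG → ℝ) (hkd : ∀ i, 0 < kd i)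
    (L : Matrix (Fin nG) (Fin nG) ℝ) (hL : L.IsSymm)
    (r w : Matrix (Fin nG) (Fin nG) ℝ) (hw : IsUnit w.det)
    (xt : ℝ → (BIdx nG nE nN → ℝ)) (xc : ℝ → (Fin nG → ℝ))
    (hxdiff : ∀ t : ℝ, HasDerivAt xt
      ((J - Rtil rG rD rE gD cD P qbar (xt t)) *ᵥ (Q *ᵥ xt t) +
        gMat nG nE nN *ᵥ
          (-(r *ᵥ ((gMat nG nE nN)ᵀ *ᵥ (Q *ᵥ xt t))) - w⁻¹ *ᵥ (-(L *ᵥ xc t)))) t)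
    (hxcdiff : ∀ t : ℝ, HasDerivAt xc
      (-((Matrix.diagonal kd * L) *ᵥ ((w⁻¹)ᵀ *ᵥ ((gMat nG nE nN)ᵀ *ᵥ (Q *ᵥ xt t))))) t)
    (hdom : ∀ t : ℝ, ∀ k : Fin nN, xt t (Sum.inr (Sum.inr k)) + qbar k ≠ 0) :
    ∀ t : ℝ, HasDerivAt
      (fun s => (1 / 2 : ℝ) * ((xt s) ⬝ᵥ (Q *ᵥ xt s)) +
        (1 / 2 : ℝ) * ((xc s) ⬝ᵥ ((Matrix.diagonal kd)⁻¹ *ᵥ xc s)))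
      (-((Q *ᵥ xt t) ⬝ᵥ
        ((Rtil rG rD rE gD cD P qbar (xt t) + gMat nG nE nN * r * (gMat nG nE nN)ᵀ) *ᵥ
          (Q *ᵥ xt t)))) t := by
  intro t
  have hKdet : IsUnit (Matrix.diagonal kd).det := by
    rw [Matrix.det_diagonal]
    exact isUnit_iff_ne_zero.2 (Finset.prod_ne_zero_iff.2 fun i _ => (hkd i).ne')
  have hKinvT : ((Matrix.diagonal kd)⁻¹)ᵀ = (Matrix.diagonal kd)⁻¹ := by
    rw [Matrix.transpose_nonsing_inv, Matrix.diagonal_transpose]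
  have h1 := hasDerivAt_halfQuad Q hQsymm xt _ t (hxdiff t)
  have h2 := hasDerivAt_halfQuad ((Matrix.diagonal kd)⁻¹) hKinvT xc _ t (hxcdiff t)
  have hsum := h1.add h2
  convert hsum using 1
  case e'_4 => rfl
  case e'_5 => rfl
  case e'_8 => rfl
  set y : BIdx nG nE nN → ℝ := Q *ᵥ xt t with hy
  set Gm := gMat nG nE nN with hGm
  set z : Fin nG → ℝ := Gmᵀ *ᵥ y with hz
  set R := Rtil rG rD rE gD cD P qbar (xt t) with hR
  have hJ0 : (J *ᵥ y) ⬝ᵥ y = 0 := by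
    have h := mulVec_dot J y y
    rw [hJ, Matrix.neg_mulVec, dotProduct_neg] at h
    have h2 : y ⬝ᵥ (J *ᵥ y) = (J *ᵥ y) ⬝ᵥ y := dotProduct_comm _ _
    linarith
  have hKK : Matrix.diagonal kd *ᵥ ((Matrix.diagonal kd)⁻¹ *ᵥ xc t) = xc t := by
    rw [Matrix.mulVec_mulVec, Matrix.mul_nonsing_inv _ hKdet, Matrix.one_mulVec]
  have hterm2 : (-((Matrix.diagonal kd * L) *ᵥ ((w⁻¹)ᵀ *ᵥ z))) ⬝ᵥ ((Matrix.diagonal kd)⁻¹ *ᵥ xc t)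
      = -(z ⬝ᵥ (w⁻¹ *ᵥ (L *ᵥ xc t))) := by
    rw [neg_dotProduct, mulVec_dot, Matrix.transpose_mul, hL.eq, Matrix.diagonal_transpose,
      ← Matrix.mulVec_mulVec, hKK, mulVec_dot, Matrix.transpose_transpose]
  have hexp1 : ((J - R) *ᵥ y + Gm *ᵥ (-(r *ᵥ z) - w⁻¹ *ᵥ (-(L *ᵥ xc t)))) ⬝ᵥ y
      = -((R *ᵥ y) ⬝ᵥ y) - (r *ᵥ z) ⬝ᵥ z + (w⁻¹ *ᵥ (L *ᵥ xc t)) ⬝ᵥ z := by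
    rw [add_dotProduct, Matrix.sub_mulVec, sub_dotProduct, hJ0, mulVec_dot Gm, ← hz,
      Matrix.mulVec_neg, sub_neg_eq_add, add_dotProduct, neg_dotProduct]
    ring
  have hGrG : y ⬝ᵥ ((Gm * r * Gmᵀ) *ᵥ y) = (r *ᵥ z) ⬝ᵥ z := by
    rw [← Matrix.mulVec_mulVec, ← Matrix.mulVec_mulVec, dotProduct_comm, mulVec_dot Gm, ← hz]
  rw [hexp1, hterm2, Matrix.add_mulVec, dotProduct_add, hGrG, dotProduct_comm y (R *ᵥ y)]
  have hc : (w⁻¹ *ᵥ (L *ᵥ xc t)) ⬝ᵥ z = z ⬝ᵥ (w⁻¹ *ᵥ (L *ᵥ xc t)) := dotProduct_comm _ _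
  linarith
end

section
/- Consider the closed-loop system: x̃ : [0,∞) → ℝⁿ and x̃_c : [0,∞) → ℝ^{nG} are differentiable and satisfy x̃'(t) = (J − R̃(x̃(t)))·Q·x̃(t) + g·ũ(t) and x̃_c'(t) = −k_I·𝓛·ũ_c(t), where ỹ = gᵀQx̃, ỹ_c = −𝓛x̃_c, ũ = −rỹ − w⁻¹ỹ_c, ũ_c = (w⁻¹)ᵀỹ, with 𝓛 symmetric and w invertible, and suppose R̃ ∘ x̃ is continuous and bounded on [0,∞). If there exists ε > 0 such that vᵀ·(R̃(x̃(t)) + g·r·gᵀ)·v ≥ ε‖v‖² for every t ≥ 0 and every v ∈ ℝⁿ, then x̃(t) → 0 as t → ∞. -/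
open Matrix

section Aux

variable {ι κ : Type*} [Fintype ι] [Fintype κ]

/-- derivative of a bilinear matrix form along two curves -/
lemma hasDerivAt_dot_mulVec (M : Matrix ι κ ℝ) {a : ℝ → ι → ℝ} {b : ℝ → κ → ℝ}
    {a' : ι → ℝ} {b' : κ → ℝ} {t : ℝ}
    (ha : HasDerivAt a a' t) (hb : HasDerivAt b b' t) :
    HasDerivAt (fun s => a s ⬝ᵥ (M *ᵥ b s)) (a' ⬝ᵥ (M *ᵥ b t) + a t ⬝ᵥ (M *ᵥ b')) t := by
  have ha' : ∀ i, HasDerivAt (fun s => a s i) (a' i) t := fun i => hasDerivAt_pi.1 ha i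
  have hb' : ∀ j, HasDerivAt (fun s => b s j) (b' j) t := fun j => hasDerivAt_pi.1 hb j
  have : HasDerivAt (fun s => ∑ i, a s i * ∑ j, M i j * b s j)
      (∑ i, (a' i * ∑ j, M i j * b t j + a t i * ∑ j, M i j * b' j)) t := by
    refine HasDerivAt.fun_sum fun i _ => ?_
    exact (ha' i).mul (HasDerivAt.fun_sum fun j _ => (hb' j).const_mul (M i j))
  simp only [dotProduct, mulVec, Finset.sum_add_distrib] at this ⊢
  exact this

lemma dot_mulVec_left (A : Matrix ι κ ℝ) (u : κ → ℝ) (z : ι → ℝ) :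
    (A *ᵥ u) ⬝ᵥ z = u ⬝ᵥ (Aᵀ *ᵥ z) := by
  rw [dotProduct_comm, dotProduct_mulVec, ← mulVec_transpose, dotProduct_comm]

lemma quad_transpose (A : Matrix ι ι ℝ) (z : ι → ℝ) :
    z ⬝ᵥ (Aᵀ *ᵥ z) = z ⬝ᵥ (A *ᵥ z) := by
  rw [← dot_mulVec_left, dotProduct_comm]

lemma sym_dot (M : Matrix ι ι ℝ) (hM : Mᵀ = M) (a b : ι → ℝ) :
    a ⬝ᵥ (M *ᵥ b) = b ⬝ᵥ (M *ᵥ a) := by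
  conv_lhs => rw [← hM]
  rw [← dot_mulVec_left, dotProduct_comm]

lemma skew_dot (J : Matrix ι ι ℝ) (hJ : Jᵀ = -J) (v : ι → ℝ) : v ⬝ᵥ (J *ᵥ v) = 0 := by
  have h := quad_transpose J v
  rw [hJ, neg_mulVec, dotProduct_neg] at h
  linarith

lemma mulVec_norm_le_of_entries (A : Matrix ι κ ℝ) {a : ℝ} (h0 : 0 ≤ a)
    (h : ∀ i j, |A i j| ≤ a) (v : κ → ℝ) :
    ‖A *ᵥ v‖ ≤ (Fintype.card κ) * a * ‖v‖ := by
  rw [pi_norm_le_iff_of_nonneg (by positivity)]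
  intro i
  calc ‖(A *ᵥ v) i‖ = |∑ j, A i j * v j| := rfl
    _ ≤ ∑ j, |A i j * v j| := Finset.abs_sum_le_sum_abs _ _
    _ ≤ ∑ j : κ, a * ‖v‖ := by
        refine Finset.sum_le_sum fun j _ => ?_
        rw [abs_mul]
        exact mul_le_mul (h i j) (norm_le_pi_norm v j) (abs_nonneg _) h0
    _ = (Fintype.card κ) * a * ‖v‖ := by
        rw [Finset.sum_const, Finset.card_univ, nsmul_eq_mul, mul_assoc]

/-- with an additional bound on the vector -/
lemma mulVec_norm_le_of_entries' (A : Matrix ι κ ℝ) {a b : ℝ} (h0 : 0 ≤ a)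
    (h : ∀ i j, |A i j| ≤ a) {v : κ → ℝ} (hv : ‖v‖ ≤ b) :
    ‖A *ᵥ v‖ ≤ (Fintype.card κ) * a * b := by
  refine le_trans (mulVec_norm_le_of_entries A h0 h v) ?_
  exact mul_le_mul_of_nonneg_left hv (by positivity)

lemma matrix_entries_bound (A : Matrix ι κ ℝ) : ∃ a : ℝ, 0 ≤ a ∧ ∀ i j, |A i j| ≤ a := by
  refine ⟨∑ i, ∑ j, |A i j|, by positivity, fun i j => ?_⟩
  calc |A i j| ≤ ∑ j', |A i j'| := by
        exact Finset.single_le_sum (fun j' _ => abs_nonneg (A i j')) (Finset.mem_univ j)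
    _ ≤ ∑ i', ∑ j', |A i' j'| := Finset.single_le_sum (f := fun i' => ∑ j', |A i' j'|)
        (fun i' _ => Finset.sum_nonneg fun _ _ => abs_nonneg _) (Finset.mem_univ i)

lemma norm_sq_le_dot [Nonempty ι] (w : ι → ℝ) : ‖w‖ ^ 2 ≤ w ⬝ᵥ w := by
  have h1 : ‖w‖ ≤ Real.sqrt (∑ i, w i ^ 2) := by
    rw [pi_norm_le_iff_of_nonneg (Real.sqrt_nonneg _)]
    intro i
    have : w i ^ 2 ≤ ∑ j, w j ^ 2 :=
      Finset.single_le_sum (f := fun j => w j ^ 2) (fun j _ => sq_nonneg _) (Finset.mem_univ i)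
    calc ‖w i‖ = Real.sqrt (w i ^ 2) := by rw [Real.sqrt_sq_eq_abs]; rfl
      _ ≤ _ := Real.sqrt_le_sqrt this
  have h2 : (Real.sqrt (∑ i, w i ^ 2)) ^ 2 = ∑ i, w i ^ 2 :=
    Real.sq_sqrt (Finset.sum_nonneg fun _ _ => sq_nonneg _)
  calc ‖w‖ ^ 2 ≤ (Real.sqrt (∑ i, w i ^ 2)) ^ 2 := by
        exact pow_le_pow_left₀ (norm_nonneg _) h1 2
    _ = ∑ i, w i ^ 2 := h2
    _ = w ⬝ᵥ w := by simp [dotProduct, sq]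

lemma posdef_coercive {ι : Type*} [Fintype ι] [DecidableEq ι] [Nonempty ι]
    {Q : Matrix ι ι ℝ} (hQ : Q.PosDef) :
    ∃ μ : ℝ, 0 < μ ∧ ∀ z : ι → ℝ, μ * ‖z‖ ^ 2 ≤ z ⬝ᵥ (Q *ᵥ z) := by
  open scoped MatrixOrder in
  set S := CFC.sqrt Q with hSdef
  open scoped MatrixOrder in
  have hSS : S * S = Q := CFC.sqrt_mul_sqrt_self Q hQ.posSemidef.nonneg
  open scoped MatrixOrder in
  have hSh : Sᵀ = S := by
    have := (CFC.sqrt_nonneg Q).posSemidef.1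
    rwa [Matrix.IsHermitian, conjTranspose_eq_transpose_of_trivial] at this
  have hdet : IsUnit S.det := by
    have hq : (0:ℝ) < Q.det := hQ.det_pos
    rw [← hSS, det_mul] at hq
    exact isUnit_iff_ne_zero.2 fun h => by simp [h] at hq
  obtain ⟨a, ha0, ha⟩ := matrix_entries_bound S⁻¹
  set C : ℝ := max ((Fintype.card ι) * a) 1 with hC
  have hC1 : (1:ℝ) ≤ C := le_max_right _ 1
  have hC0 : (0:ℝ) < C := lt_of_lt_of_le one_pos hC1
  refine ⟨(C^2)⁻¹, by positivity, fun z => ?_⟩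
  have hz : ‖z‖ ≤ C * ‖S *ᵥ z‖ := by
    have h1 : S⁻¹ *ᵥ (S *ᵥ z) = z := by
      rw [mulVec_mulVec, nonsing_inv_mul S hdet, one_mulVec]
    calc ‖z‖ = ‖S⁻¹ *ᵥ (S *ᵥ z)‖ := by rw [h1]
      _ ≤ (Fintype.card ι) * a * ‖S *ᵥ z‖ := mulVec_norm_le_of_entries S⁻¹ ha0 ha _
      _ ≤ C * ‖S *ᵥ z‖ := by
          exact mul_le_mul_of_nonneg_right (le_max_left _ 1) (norm_nonneg _)
  have h2 : ‖S *ᵥ z‖ ^ 2 ≤ z ⬝ᵥ (Q *ᵥ z) := by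
    calc ‖S *ᵥ z‖ ^ 2 ≤ (S *ᵥ z) ⬝ᵥ (S *ᵥ z) := norm_sq_le_dot _
      _ = z ⬝ᵥ (Sᵀ *ᵥ (S *ᵥ z)) := dot_mulVec_left S z (S *ᵥ z)
      _ = z ⬝ᵥ (Q *ᵥ z) := by rw [hSh, mulVec_mulVec, hSS]
  have hz2 : ‖z‖ ^ 2 ≤ C ^ 2 * ‖S *ᵥ z‖ ^ 2 := by
    calc ‖z‖ ^ 2 ≤ (C * ‖S *ᵥ z‖) ^ 2 := pow_le_pow_left₀ (norm_nonneg _) hz 2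
      _ = C ^ 2 * ‖S *ᵥ z‖ ^ 2 := by ring
  have h3 : ‖z‖ ^ 2 ≤ C ^ 2 * (z ⬝ᵥ (Q *ᵥ z)) :=
    le_trans hz2 (mul_le_mul_of_nonneg_left h2 (by positivity))
  rw [inv_mul_le_iff₀ (by positivity : (0:ℝ) < C ^ 2)]
  calc ‖z‖ ^ 2 ≤ C ^ 2 * (z ⬝ᵥ (Q *ᵥ z)) := h3
    _ = _ := by ring

lemma key_identity [DecidableEq κ]
    (R J : Matrix ι ι ℝ) (hJ : Jᵀ = -J)
    (g : Matrix ι κ ℝ) (r W L : Matrix κ κ ℝ) (hL : Lᵀ = L)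
    (kd : κ → ℝ) (hkd : ∀ i, kd i ≠ 0) (v : ι → ℝ) (c : κ → ℝ) :
    ((J - R) *ᵥ v + g *ᵥ (-(r *ᵥ (gᵀ *ᵥ v)) - W *ᵥ (-(L *ᵥ c)))) ⬝ᵥ v
      + (-((Matrix.diagonal kd * L) *ᵥ (Wᵀ *ᵥ (gᵀ *ᵥ v)))) ⬝ᵥ
          (Matrix.diagonal (fun i => (kd i)⁻¹) *ᵥ c)
      = -(v ⬝ᵥ ((R + g * r * gᵀ) *ᵥ v)) := by
  set y := gᵀ *ᵥ v with hy
  have term1 : ((J - R) *ᵥ v) ⬝ᵥ v = -(v ⬝ᵥ (R *ᵥ v)) := by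
    rw [dot_mulVec_left, quad_transpose, sub_mulVec, dotProduct_sub, skew_dot J hJ v, zero_sub]
  have term2 : (g *ᵥ (-(r *ᵥ y) - W *ᵥ (-(L *ᵥ c)))) ⬝ᵥ v
      = -(v ⬝ᵥ ((g * r * gᵀ) *ᵥ v)) + (W *ᵥ (L *ᵥ c)) ⬝ᵥ y := by
    rw [dot_mulVec_left, dotProduct_comm, mulVec_neg, sub_neg_eq_add, dotProduct_add,
      dotProduct_comm _ y]
    congr 1
    · rw [dotProduct_neg, dotProduct_comm]
      congr 1
      rw [dot_mulVec_left r y y, quad_transpose, hy, dot_mulVec_left gᵀ v (r *ᵥ (gᵀ *ᵥ v)),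
        transpose_transpose, mulVec_mulVec, mulVec_mulVec, dotProduct_comm]
  have hKK : (Matrix.diagonal kd) *ᵥ ((Matrix.diagonal fun i => (kd i)⁻¹) *ᵥ c) = c := by
    ext i
    rw [mulVec_diagonal, mulVec_diagonal, ← mul_assoc, mul_inv_cancel₀ (hkd i), one_mul]
  have term3 : (-((Matrix.diagonal kd * L) *ᵥ (Wᵀ *ᵥ y))) ⬝ᵥ
      ((Matrix.diagonal fun i => (kd i)⁻¹) *ᵥ c) = -((W *ᵥ (L *ᵥ c)) ⬝ᵥ y) := by
    rw [neg_dotProduct, dot_mulVec_left, transpose_mul, diagonal_transpose, hL]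
    congr 1
    rw [← mulVec_mulVec, hKK]
    rw [dot_mulVec_left Wᵀ y (L *ᵥ c), transpose_transpose, dotProduct_comm]
  rw [add_dotProduct, term1, term2, term3, add_mulVec, dotProduct_add]
  ring

end Aux

set_option maxHeartbeats 2000000 in
/-- **attractivity in Proposition 2.** If along the closed loop the
dissipation quadratic form is uniformly coercive (`vᵀ(R̃(x̃(t)) + g r gᵀ)v ≥ ε‖v‖²`) and
`R̃ ∘ x̃` is continuous and bounded on `[0,∞)`, then the incremental electrical state
converges to the origin. -/
theorem closed_loop_attractivity
    (nG nE nN : ℕ) (hnG : 0 < nG) (hnE : 0 < nE) (hnN : 0 < nN)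
    (Rt : (BIdx nG nE nN → ℝ) → Matrix (BIdx nG nE nN) (BIdx nG nE nN) ℝ)
    (Q : Matrix (BIdx nG nE nN) (BIdx nG nE nN) ℝ) (hQsymm : Q.IsSymm) (hQpd : Q.PosDef)
    (J : Matrix (BIdx nG nE nN) (BIdx nG nE nN) ℝ) (hJ : Jᵀ = -J)
    (kd : Fin nG → ℝ) (hkd : ∀ i, 0 < kd i)
    (L : Matrix (Fin nG) (Fin nG) ℝ) (hL : L.IsSymm)
    (r w : Matrix (Fin nG) (Fin nG) ℝ) (hw : IsUnit w.det)
    (xt : ℝ → (BIdx nG nE nN → ℝ)) (xc : ℝ → (Fin nG → ℝ))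
    (hxdiff : ∀ t : ℝ, 0 ≤ t → HasDerivAt xt
      ((J - Rt (xt t)) *ᵥ (Q *ᵥ xt t) +
        gMat nG nE nN *ᵥ
          (-(r *ᵥ ((gMat nG nE nN)ᵀ *ᵥ (Q *ᵥ xt t))) - w⁻¹ *ᵥ (-(L *ᵥ xc t)))) t)
    (hxcdiff : ∀ t : ℝ, 0 ≤ t → HasDerivAt xc
      (-((Matrix.diagonal kd * L) *ᵥ ((w⁻¹)ᵀ *ᵥ ((gMat nG nE nN)ᵀ *ᵥ (Q *ᵥ xt t))))) t)
    (hcont : ∀ i j, ContinuousOn (fun t => Rt (xt t) i j) (Set.Ici 0))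
    (hbdd : ∃ M : ℝ, ∀ t ∈ Set.Ici (0 : ℝ), ∀ i j, |Rt (xt t) i j| ≤ M)
    (ε : ℝ) (hε : 0 < ε)
    (hcoer : ∀ t ∈ Set.Ici (0 : ℝ), ∀ v : BIdx nG nE nN → ℝ,
      ε * ‖v‖ ^ 2 ≤ v ⬝ᵥ ((Rt (xt t) + gMat nG nE nN * r * (gMat nG nE nN)ᵀ) *ᵥ v)) :
    Filter.Tendsto xt Filter.atTop (nhds 0) := by
  haveI : Nonempty (Fin nG) := ⟨⟨0, hnG⟩⟩
  haveI : Nonempty (BIdx nG nE nN) := ⟨Sum.inl ⟨0, hnG⟩⟩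
  set G := gMat nG nE nN with hGdef
  set Kinv : Matrix (Fin nG) (Fin nG) ℝ := Matrix.diagonal (fun i => (kd i)⁻¹) with hKinvdef
  set X' : ℝ → (BIdx nG nE nN → ℝ) := fun t =>
    (J - Rt (xt t)) *ᵥ (Q *ᵥ xt t) +
      G *ᵥ (-(r *ᵥ (Gᵀ *ᵥ (Q *ᵥ xt t))) - w⁻¹ *ᵥ (-(L *ᵥ xc t))) with hX'def
  set H : ℝ → ℝ := fun t => (xt t ⬝ᵥ (Q *ᵥ xt t)) / 2 + (xc t ⬝ᵥ (Kinv *ᵥ xc t)) / 2 with hHdef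
  set D : ℝ → ℝ := fun t => (Q *ᵥ xt t) ⬝ᵥ ((Rt (xt t) + G * r * Gᵀ) *ᵥ (Q *ᵥ xt t)) with hDdef
  set ψ : ℝ → ℝ := fun t => ‖Q *ᵥ xt t‖ with hψdef
  have hQt : Qᵀ = Q := hQsymm
  have hKinvt : Kinvᵀ = Kinv := diagonal_transpose _
  have hkdne : ∀ i, kd i ≠ 0 := fun i => (hkd i).ne'
  -- derivative of the storage function
  have hHderiv : ∀ t, 0 ≤ t → HasDerivAt H (-(D t)) t := by
    intro t ht
    have h1 := hasDerivAt_dot_mulVec Q (hxdiff t ht) (hxdiff t ht)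
    have h2 := hasDerivAt_dot_mulVec Kinv (hxcdiff t ht) (hxcdiff t ht)
    have h := (h1.div_const 2).add (h2.div_const 2)
    refine (show HasDerivAt H _ t from h).congr_deriv ?_
    have sx : xt t ⬝ᵥ (Q *ᵥ X' t) = X' t ⬝ᵥ (Q *ᵥ xt t) := sym_dot Q hQt _ _
    set C' : Fin nG → ℝ := -((Matrix.diagonal kd * L) *ᵥ ((w⁻¹)ᵀ *ᵥ (Gᵀ *ᵥ (Q *ᵥ xt t))))
      with hC'def
    have sc : xc t ⬝ᵥ (Kinv *ᵥ C') = C' ⬝ᵥ (Kinv *ᵥ xc t) := sym_dot Kinv hKinvt _ _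
    have key := key_identity (Rt (xt t)) J hJ G r w⁻¹ L hL kd hkdne (Q *ᵥ xt t) (xc t)
    have hXv : X' t ⬝ᵥ (Q *ᵥ xt t) + C' ⬝ᵥ (Kinv *ᵥ xc t) = -(D t) := key
    simp only [hX'def, hC'def] at sx sc hXv ⊢
    linarith
  have hDlb : ∀ t, 0 ≤ t → ε * ψ t ^ 2 ≤ D t := fun t ht => hcoer t ht _
  have hD0 : ∀ t, 0 ≤ t → 0 ≤ D t := fun t ht =>
    le_trans (by positivity) (hDlb t ht)
  -- H is nonincreasing and nonnegative
  have hHanti : AntitoneOn H (Set.Ici 0) := by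
    apply antitoneOn_of_deriv_nonpos (convex_Ici 0)
    · intro t ht
      exact (hHderiv t ht).continuousAt.continuousWithinAt
    · intro t ht
      rw [interior_Ici] at ht
      exact ((hHderiv t (le_of_lt ht)).differentiableAt).differentiableWithinAt
    · intro t ht
      rw [interior_Ici] at ht
      rw [(hHderiv t ht.le).deriv]
      linarith [hD0 t ht.le]
  have hxQx_nonneg : ∀ t, 0 ≤ xt t ⬝ᵥ (Q *ᵥ xt t) := by
    intro t
    rcases eq_or_ne (xt t) 0 with h | h
    · simp [h]
    · exact le_of_lt (by simpa using hQpd.dotProduct_mulVec_pos h)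
  have hKc_nonneg : ∀ t, 0 ≤ xc t ⬝ᵥ (Kinv *ᵥ xc t) := by
    intro t
    simp only [hKinvdef, dotProduct, mulVec_diagonal]
    refine Finset.sum_nonneg fun i _ => ?_
    have h1 : xc t i * ((kd i)⁻¹ * xc t i) = (kd i)⁻¹ * (xc t i) ^ 2 := by ring
    rw [h1]
    exact mul_nonneg (inv_nonneg.2 (hkd i).le) (sq_nonneg _)
  have hHnonneg : ∀ t, 0 ≤ H t := by
    intro t
    simp only [hHdef]
    linarith [hxQx_nonneg t, hKc_nonneg t]
  have hHle : ∀ t, 0 ≤ t → H t ≤ H 0 :=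
    fun t ht => hHanti Set.self_mem_Ici ht ht
  -- boundedness of the state
  obtain ⟨μ, hμ0, hμ⟩ := posdef_coercive hQpd
  have hH00 : 0 ≤ H 0 := hHnonneg 0
  set Bx : ℝ := Real.sqrt (2 * H 0 / μ) with hBxdef
  have hxb : ∀ t, 0 ≤ t → ‖xt t‖ ≤ Bx := by
    intro t ht
    rw [hBxdef, Real.le_sqrt (norm_nonneg _) (div_nonneg (by linarith) hμ0.le)]
    have h1 : μ * ‖xt t‖ ^ 2 ≤ xt t ⬝ᵥ (Q *ᵥ xt t) := hμ (xt t)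
    have h2 : xt t ⬝ᵥ (Q *ᵥ xt t) ≤ 2 * H 0 := by
      have e : 2 * H t = xt t ⬝ᵥ (Q *ᵥ xt t) + xc t ⬝ᵥ (Kinv *ᵥ xc t) := by
        simp only [hHdef]; ring
      linarith [hHle t ht, hKc_nonneg t]
    rw [le_div_iff₀ hμ0]
    linarith
  set km : ℝ := Finset.univ.inf' Finset.univ_nonempty (fun i => (kd i)⁻¹) with hkmdef
  have hkm0 : 0 < km := by
    rw [hkmdef, Finset.lt_inf'_iff]
    intro i _
    exact inv_pos.2 (hkd i)
  have hkmle : ∀ i, km ≤ (kd i)⁻¹ := fun i =>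
    Finset.inf'_le _ (Finset.mem_univ i)
  set Bc : ℝ := Real.sqrt (2 * H 0 / km) with hBcdef
  have hcb : ∀ t, 0 ≤ t → ‖xc t‖ ≤ Bc := by
    intro t ht
    rw [hBcdef, Real.le_sqrt (norm_nonneg _) (div_nonneg (by linarith) hkm0.le)]
    have h1 : km * ‖xc t‖ ^ 2 ≤ xc t ⬝ᵥ (Kinv *ᵥ xc t) := by
      have ha : ‖xc t‖ ^ 2 ≤ xc t ⬝ᵥ xc t := norm_sq_le_dot _
      have hb : km * (xc t ⬝ᵥ xc t) ≤ xc t ⬝ᵥ (Kinv *ᵥ xc t) := by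
        simp only [hKinvdef, dotProduct, mulVec_diagonal, Finset.mul_sum]
        refine Finset.sum_le_sum fun i _ => ?_
        have h2 : km * (xc t i * xc t i) ≤ (kd i)⁻¹ * (xc t i * xc t i) :=
          mul_le_mul_of_nonneg_right (hkmle i) (mul_self_nonneg _)
        nlinarith
      nlinarith [mul_le_mul_of_nonneg_left ha (le_of_lt hkm0)]
    have h2 : xc t ⬝ᵥ (Kinv *ᵥ xc t) ≤ 2 * H 0 := by
      have e : 2 * H t = xt t ⬝ᵥ (Q *ᵥ xt t) + xc t ⬝ᵥ (Kinv *ᵥ xc t) := by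
        simp only [hHdef]; ring
      linarith [hHle t ht, hxQx_nonneg t]
    rw [le_div_iff₀ hkm0]
    linarith
  -- bound on the derivative of xt
  obtain ⟨M0, hM0⟩ := hbdd
  set M' : ℝ := max M0 0 with hM'def
  have hM'0 : 0 ≤ M' := le_max_right _ _
  have hM' : ∀ t, 0 ≤ t → ∀ i j, |Rt (xt t) i j| ≤ M' :=
    fun t ht i j => le_trans (hM0 t ht i j) (le_max_left _ _)
  obtain ⟨aJ, haJ0, haJ⟩ := matrix_entries_bound J
  obtain ⟨aQ, haQ0, haQ⟩ := matrix_entries_bound Q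
  obtain ⟨ar, har0, har⟩ := matrix_entries_bound r
  obtain ⟨aw, haw0, haw⟩ := matrix_entries_bound w⁻¹
  obtain ⟨aL, haL0, haL⟩ := matrix_entries_bound L
  have hgb : ∀ i j, |G i j| ≤ 1 := by
    intro i j
    rcases i with i' | i'
    · simp only [hGdef, gMat, Matrix.of_apply]
      split_ifs <;> norm_num
    · simp [hGdef, gMat]
  have hgtb : ∀ i j, |Gᵀ i j| ≤ 1 := fun i j => hgb j i
  have hBx0 : 0 ≤ Bx := Real.sqrt_nonneg _
  have hBc0 : 0 ≤ Bc := Real.sqrt_nonneg _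
  set n1 : ℝ := (Fintype.card (BIdx nG nE nN) : ℝ) with hn1def
  set n2 : ℝ := (Fintype.card (Fin nG) : ℝ) with hn2def
  have hn10 : 0 ≤ n1 := Nat.cast_nonneg _
  have hn20 : 0 ≤ n2 := Nat.cast_nonneg _
  set Bv : ℝ := n1 * aQ * Bx with hBvdef
  have hBv0 : 0 ≤ Bv := by positivity
  have hvb : ∀ t, 0 ≤ t → ‖Q *ᵥ xt t‖ ≤ Bv := by
    intro t ht
    exact mulVec_norm_le_of_entries' Q haQ0 haQ (hxb t ht)
  set By : ℝ := n1 * 1 * Bv with hBydef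
  have hyb : ∀ t, 0 ≤ t → ‖Gᵀ *ᵥ (Q *ᵥ xt t)‖ ≤ By := by
    intro t ht
    exact mulVec_norm_le_of_entries' Gᵀ zero_le_one hgtb (hvb t ht)
  have hBy0 : 0 ≤ By := by positivity
  set B' : ℝ := n1 * (aJ + M') * Bv + n2 * 1 * (n2 * ar * By + n2 * aw * (n2 * aL * Bc))
    with hB'def
  have hB'0 : 0 ≤ B' := by positivity
  have hX'b : ∀ t, 0 ≤ t → ‖X' t‖ ≤ B' := by
    intro t ht
    have h1 : ‖(J - Rt (xt t)) *ᵥ (Q *ᵥ xt t)‖ ≤ n1 * (aJ + M') * Bv := by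
      refine mulVec_norm_le_of_entries' _ (by positivity) (fun i j => ?_) (hvb t ht)
      calc |(J - Rt (xt t)) i j| = |J i j - Rt (xt t) i j| := rfl
        _ ≤ |J i j| + |Rt (xt t) i j| := abs_sub _ _
        _ ≤ aJ + M' := add_le_add (haJ i j) (hM' t ht i j)
    have h2 : ‖r *ᵥ (Gᵀ *ᵥ (Q *ᵥ xt t))‖ ≤ n2 * ar * By :=
      mulVec_norm_le_of_entries' r har0 har (hyb t ht)
    have h3 : ‖L *ᵥ xc t‖ ≤ n2 * aL * Bc :=
      mulVec_norm_le_of_entries' L haL0 haL (hcb t ht)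
    have h4 : ‖w⁻¹ *ᵥ (-(L *ᵥ xc t))‖ ≤ n2 * aw * (n2 * aL * Bc) := by
      refine mulVec_norm_le_of_entries' w⁻¹ haw0 haw ?_
      rw [norm_neg]
      exact h3
    have h5 : ‖-(r *ᵥ (Gᵀ *ᵥ (Q *ᵥ xt t))) - w⁻¹ *ᵥ (-(L *ᵥ xc t))‖
        ≤ n2 * ar * By + n2 * aw * (n2 * aL * Bc) := by
      calc ‖-(r *ᵥ (Gᵀ *ᵥ (Q *ᵥ xt t))) - w⁻¹ *ᵥ (-(L *ᵥ xc t))‖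
          ≤ ‖-(r *ᵥ (Gᵀ *ᵥ (Q *ᵥ xt t)))‖ + ‖w⁻¹ *ᵥ (-(L *ᵥ xc t))‖ := norm_sub_le _ _
        _ ≤ n2 * ar * By + n2 * aw * (n2 * aL * Bc) := by
            rw [norm_neg]; exact add_le_add h2 h4
    have h6 : ‖G *ᵥ (-(r *ᵥ (Gᵀ *ᵥ (Q *ᵥ xt t))) - w⁻¹ *ᵥ (-(L *ᵥ xc t)))‖
        ≤ n2 * 1 * (n2 * ar * By + n2 * aw * (n2 * aL * Bc)) :=
      mulVec_norm_le_of_entries' G zero_le_one hgb h5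
    calc ‖X' t‖ ≤ ‖(J - Rt (xt t)) *ᵥ (Q *ᵥ xt t)‖
          + ‖G *ᵥ (-(r *ᵥ (Gᵀ *ᵥ (Q *ᵥ xt t))) - w⁻¹ *ᵥ (-(L *ᵥ xc t)))‖ := norm_add_le _ _
      _ ≤ B' := by rw [hB'def]; exact add_le_add h1 h6
  -- Lipschitz property of xt and ψ
  have hxLip : ∀ s ∈ Set.Ici (0:ℝ), ∀ t ∈ Set.Ici (0:ℝ),
      ‖xt t - xt s‖ ≤ B' * ‖t - s‖ := by
    intro s hs t ht
    exact Convex.norm_image_sub_le_of_norm_hasDerivWithin_le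
      (f' := X') (fun τ hτ => (hxdiff τ hτ).hasDerivWithinAt)
      (fun τ hτ => hX'b τ hτ) (convex_Ici 0) hs ht
  set Lp : ℝ := n1 * aQ * B' + 1 with hLpdef
  have hLp0 : 0 < Lp := by positivity
  have hψLip : ∀ s, 0 ≤ s → ∀ t, 0 ≤ t → |ψ t - ψ s| ≤ Lp * |t - s| := by
    intro s hs t ht
    have h1 : |ψ t - ψ s| ≤ ‖Q *ᵥ xt t - Q *ᵥ xt s‖ := abs_norm_sub_norm_le _ _
    have h2 : Q *ᵥ xt t - Q *ᵥ xt s = Q *ᵥ (xt t - xt s) := (mulVec_sub Q _ _).symm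
    have h3 : ‖Q *ᵥ (xt t - xt s)‖ ≤ n1 * aQ * ‖xt t - xt s‖ :=
      mulVec_norm_le_of_entries Q haQ0 haQ _
    have h4 : ‖xt t - xt s‖ ≤ B' * ‖t - s‖ := hxLip s hs t ht
    have h5 : n1 * aQ * ‖xt t - xt s‖ ≤ n1 * aQ * (B' * ‖t - s‖) :=
      mul_le_mul_of_nonneg_left h4 (by positivity)
    have h6 : ‖t - s‖ = |t - s| := Real.norm_eq_abs _
    calc |ψ t - ψ s| ≤ ‖Q *ᵥ xt t - Q *ᵥ xt s‖ := h1
      _ = ‖Q *ᵥ (xt t - xt s)‖ := by rw [h2]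
      _ ≤ n1 * aQ * ‖xt t - xt s‖ := h3
      _ ≤ n1 * aQ * (B' * ‖t - s‖) := h5
      _ ≤ Lp * |t - s| := by
          rw [h6, hLpdef]
          nlinarith [abs_nonneg (t - s), mul_nonneg (mul_nonneg hn10 haQ0) hB'0]
  -- Barbalat-type argument: ψ → 0
  have hψ0 : Filter.Tendsto ψ Filter.atTop (nhds 0) := by
    rw [Metric.tendsto_atTop]
    intro η hη
    by_contra hcon
    push_neg at hcon
    set ℓ : ℝ := η / (2 * Lp) with hℓdef
    have hℓ0 : 0 < ℓ := by positivity
    have hLpℓ : Lp * ℓ = η / 2 := by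
      rw [hℓdef]
      field_simp
    set c0 : ℝ := ε * η ^ 2 / 4 * ℓ with hc0def
    have hc00 : 0 < c0 := by positivity
    have drop : ∀ s, 0 ≤ s → η ≤ ψ s → H (s + ℓ) ≤ H s - c0 := by
      intro s hs hψs
      have hhalf : ∀ τ, τ ∈ Set.Icc s (s + ℓ) → η / 2 ≤ ψ τ := by
        intro τ hτ
        have hτ0 : 0 ≤ τ := le_trans hs hτ.1
        have h1 := hψLip s hs τ hτ0
        have h2 : |τ - s| ≤ ℓ := by
          rw [abs_of_nonneg (by linarith [hτ.1])]
          linarith [hτ.2]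
        have h3 : Lp * |τ - s| ≤ η / 2 := by
          rw [← hLpℓ]
          exact mul_le_mul_of_nonneg_left h2 (le_of_lt hLp0)
        have h4 : ψ s - ψ τ ≤ |ψ τ - ψ s| := by
          rw [abs_sub_comm]
          exact le_abs_self _
        have h5 : ψ s - ψ τ ≤ η / 2 := le_trans h4 (le_trans h1 h3)
        linarith
      set Gf : ℝ → ℝ := fun τ => H τ + (ε * η ^ 2 / 4) * τ with hGfdef
      have hGfderiv : ∀ τ, 0 ≤ τ → HasDerivAt Gf (-(D τ) + ε * η ^ 2 / 4) τ := by
        intro τ hτ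
        have h1 : HasDerivAt (fun x : ℝ => (ε * η ^ 2 / 4) * x) (ε * η ^ 2 / 4) τ := by
          simpa using (hasDerivAt_id τ).const_mul (ε * η ^ 2 / 4)
        exact (hHderiv τ hτ).add h1
      have hGanti : AntitoneOn Gf (Set.Icc s (s + ℓ)) := by
        apply antitoneOn_of_deriv_nonpos (convex_Icc _ _)
        · intro τ hτ
          exact (hGfderiv τ (le_trans hs hτ.1)).continuousAt.continuousWithinAt
        · intro τ hτ
          rw [interior_Icc] at hτ
          exact ((hGfderiv τ (le_trans hs (le_of_lt hτ.1))).differentiableAt).differentiableWithinAt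
        · intro τ hτ
          rw [interior_Icc] at hτ
          have hτ0 : 0 ≤ τ := le_trans hs (le_of_lt hτ.1)
          rw [(hGfderiv τ hτ0).deriv]
          have h1 : η / 2 ≤ ψ τ := hhalf τ ⟨le_of_lt hτ.1, le_of_lt hτ.2⟩
          have h2 : ε * (η / 2) ^ 2 ≤ ε * ψ τ ^ 2 := by
            apply mul_le_mul_of_nonneg_left _ (le_of_lt hε)
            apply pow_le_pow_left₀ (by positivity) h1
          have h3 := hDlb τ hτ0
          nlinarith
      have h1 : Gf (s + ℓ) ≤ Gf s :=
        hGanti ⟨le_refl s, by linarith⟩ ⟨by linarith, le_refl _⟩ (by linarith)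
      simp only [hGfdef] at h1
      rw [hc0def]
      nlinarith
    have hiter : ∀ k : ℕ, ∃ t, 0 ≤ t ∧ H t ≤ H 0 - k * c0 := by
      intro k
      induction k with
      | zero => exact ⟨0, le_refl 0, by simp⟩
      | succ k ih =>
        obtain ⟨t, ht0, hHt⟩ := ih
        obtain ⟨s, hst, hηs⟩ := hcon t
        have hs0 : 0 ≤ s := le_trans ht0 hst
        have hψs : η ≤ ψ s := by
          have : dist (ψ s) 0 = ψ s := by
            rw [Real.dist_eq, sub_zero, abs_of_nonneg (norm_nonneg _)]
          linarith [hηs, this.symm.le]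
        have h1 := drop s hs0 hψs
        have h2 : H s ≤ H t := hHanti ht0 hs0 hst
        refine ⟨s + ℓ, by linarith, ?_⟩
        push_cast
        linarith
    obtain ⟨k, hk⟩ := exists_nat_gt (H 0 / c0)
    obtain ⟨t, ht0, hHt⟩ := hiter k
    have h1 : H 0 < k * c0 := by
      rwa [div_lt_iff₀ hc00] at hk
    linarith [hHnonneg t]
  -- conclude: xt → 0
  have hQx0 : Filter.Tendsto (fun t => Q *ᵥ xt t) Filter.atTop (nhds 0) := by
    rw [tendsto_zero_iff_norm_tendsto_zero]
    exact hψ0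
  have hQdet : IsUnit Q.det := isUnit_iff_ne_zero.2 (ne_of_gt hQpd.det_pos)
  have hinv : ∀ t, Q⁻¹ *ᵥ (Q *ᵥ xt t) = xt t := by
    intro t
    rw [mulVec_mulVec, nonsing_inv_mul Q hQdet, one_mulVec]
  have hcontlin : Continuous fun v : BIdx nG nE nN → ℝ => Q⁻¹ *ᵥ v := by
    exact LinearMap.continuous_of_finiteDimensional (Matrix.mulVecLin Q⁻¹)
  have h2 : Filter.Tendsto (fun t => Q⁻¹ *ᵥ (Q *ᵥ xt t)) Filter.atTop (nhds (Q⁻¹ *ᵥ 0)) :=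
    (hcontlin.tendsto 0).comp hQx0
  simp only [mulVec_zero] at h2
  have h3 : (fun t => Q⁻¹ *ᵥ (Q *ᵥ xt t)) = xt := funext hinv
  rwa [h3] at h2
end
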